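/- Let A, B, C, D be complex matrices of compatible sizes with A, D square, and set S = A − C D^d B. If A^π C D^d B = 0, then S A^π is nilpotent with ind(A) ≤ ind(S A^π) ≤ ind(A) + 1, and in particular (S A^π)^d = 0. -/

import Mathlib

open Matrix Finset

attribute [local instance] Classical.propDecidable

noncomputable def drazin {n : Type*} [Fintype n] [DecidableEq n]
    (A : Matrix n n ℂ) : Matrix n n ℂ :=
  if h : ∃ X : Matrix n n ℂ,
      A * X = X * A ∧ X * A * X = X ∧ ∃ k : ℕ, A ^ (k + 1) * X = A ^ k
  then h.choose else 0

noncomputable def ind {n : Type*} [Fintype n] [DecidableEq n]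
    (A : Matrix n n ℂ) : ℕ :=
  sInf {k : ℕ | (A ^ k).rank = (A ^ (k + 1)).rank}

noncomputable def spi {n : Type*} [Fintype n] [DecidableEq n]
    (A : Matrix n n ℂ) : Matrix n n ℂ :=
  1 - A * drazin A

namespace DrazinAux

set_option linter.unusedSectionVars false

variable {n : Type*} [Fintype n] [DecidableEq n]

lemma range_mul_le (A B : Matrix n n ℂ) :
    LinearMap.range (A * B).mulVecLin ≤ LinearMap.range A.mulVecLin := by
  rw [Matrix.mulVecLin_mul]
  exact LinearMap.range_comp_le_range _ _

lemma exists_factor {A B : Matrix n n ℂ}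
    (h : LinearMap.range B.mulVecLin ≤ LinearMap.range A.mulVecLin) :
    ∃ C : Matrix n n ℂ, B = A * C := by
  have hc : ∀ j : n, ∃ x : n → ℂ, A.mulVec x = B.mulVec (Pi.single j 1) := by
    intro j
    have : B.mulVec (Pi.single j 1) ∈ LinearMap.range A.mulVecLin :=
      h ⟨Pi.single j 1, rfl⟩
    obtain ⟨x, hx⟩ := this
    exact ⟨x, hx⟩
  choose c hcspec using hc
  refine ⟨Matrix.of (fun i j => c j i), ?_⟩
  ext i j
  have h2 := congrFun (hcspec j) i
  simp only [Matrix.mulVec_single, mul_one, Pi.smul_apply, MulOpposite.op_one, one_smul, Matrix.col_apply] at h2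
  rw [Matrix.mul_apply, ← h2]
  simp [Matrix.mulVec, dotProduct]

lemma range_pow_le (A : Matrix n n ℂ) (k j : ℕ) (hkj : k ≤ j) :
    LinearMap.range (A ^ j).mulVecLin ≤ LinearMap.range (A ^ k).mulVecLin := by
  obtain ⟨t, rfl⟩ := Nat.exists_eq_add_of_le hkj
  rw [pow_add]
  exact range_mul_le _ _

lemma rank_pow_antitone (A : Matrix n n ℂ) {k j : ℕ} (hkj : k ≤ j) :
    (A ^ j).rank ≤ (A ^ k).rank :=
  Submodule.finrank_mono (range_pow_le A k j hkj)

/-- Once ranks of consecutive powers agree, the ranges stabilize. -/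
lemma range_stab (A : Matrix n n ℂ) (k : ℕ)
    (h : (A ^ k).rank = (A ^ (k + 1)).rank) :
    ∀ j, k ≤ j →
      LinearMap.range (A ^ j).mulVecLin = LinearMap.range (A ^ k).mulVecLin := by
  have hstep : LinearMap.range (A ^ (k + 1)).mulVecLin
      = LinearMap.range (A ^ k).mulVecLin := by
    refine Submodule.eq_of_le_of_finrank_le (range_pow_le A k (k + 1) (Nat.le_succ k)) ?_
    exact le_of_eq h
  intro j hj
  obtain ⟨t, rfl⟩ := Nat.exists_eq_add_of_le hj
  clear hj
  induction t with
  | zero => rfl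
  | succ t ih =>
    have h1 : A ^ (k + (t + 1)) = A * A ^ (k + t) := by
      rw [show k + (t + 1) = (k + t) + 1 by omega, pow_succ']
    have h2 : A ^ (k + 1) = A * A ^ k := pow_succ' A k
    rw [h1, Matrix.mulVecLin_mul, LinearMap.range_comp, ih,
      ← LinearMap.range_comp, ← Matrix.mulVecLin_mul, ← h2, hstep]

lemma exists_rank_stab (A : Matrix n n ℂ) :
    ∃ k : ℕ, (A ^ k).rank = (A ^ (k + 1)).rank := by
  by_contra hc
  push_neg at hc
  have hlt : ∀ k : ℕ, (A ^ (k + 1)).rank < (A ^ k).rank := fun k =>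
    lt_of_le_of_ne (rank_pow_antitone A (Nat.le_succ k)) (fun he => hc k he.symm)
  have hb : ∀ k : ℕ, (A ^ k).rank + k ≤ (A ^ 0).rank := by
    intro k
    induction k with
    | zero => simp
    | succ k ih =>
      have := hlt k
      omega
  have := hb ((A ^ 0).rank + 1)
  omega

lemma rank_eq_zero' {A : Matrix n n ℂ} (h : A.rank = 0) : A = 0 := by
  have hbot : LinearMap.range A.mulVecLin = ⊥ := by
    rw [Matrix.rank] at h
    rwa [Submodule.finrank_eq_zero] at h
  have hz : ∀ x, A.mulVec x = 0 := by
    intro x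
    have : A.mulVecLin x ∈ LinearMap.range A.mulVecLin := ⟨x, rfl⟩
    rw [hbot] at this
    simpa using this
  ext i j
  have := congrFun (hz (Pi.single j 1)) i
  simpa using this

/-- Existence of the Drazin inverse given one-sided factorizations. -/
lemma drazin_of (M : Matrix n n ℂ) (k : ℕ) (U V : Matrix n n ℂ)
    (hU : M ^ k = M ^ (k + 1) * U) (hV : M ^ k = V * M ^ (k + 1)) :
    ∃ X : Matrix n n ℂ,
      M * X = X * M ∧ X * M * X = X ∧ ∃ j : ℕ, M ^ (j + 1) * X = M ^ j := by
  have h1 : ∀ j : ℕ, M ^ (k + j) * U ^ j = M ^ k := by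
    intro j
    induction j with
    | zero => simp
    | succ j ih =>
      calc M ^ (k + (j + 1)) * U ^ (j + 1)
          = M ^ j * (M ^ (k + 1) * U * U ^ j) := by
            rw [show k + (j + 1) = j + (k + 1) by omega, pow_add M j (k + 1),
              pow_succ' U j]
            simp only [mul_assoc]
        _ = M ^ j * (M ^ k * U ^ j) := by rw [← hU]
        _ = M ^ (k + j) * U ^ j := by
            rw [show k + j = j + k by omega, pow_add, mul_assoc]
        _ = M ^ k := ih
  have h2 : ∀ j : ℕ, V ^ j * M ^ (k + j) = M ^ k := by
    intro j
    induction j with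
    | zero => simp
    | succ j ih =>
      calc V ^ (j + 1) * M ^ (k + (j + 1))
          = V ^ j * (V * M ^ (k + 1)) * M ^ j := by
            rw [show k + (j + 1) = (k + 1) + j by omega, pow_add M (k + 1) j,
              pow_succ V j]
            simp only [mul_assoc]
        _ = V ^ j * M ^ k * M ^ j := by rw [← hV]
        _ = V ^ j * M ^ (k + j) := by rw [mul_assoc, ← pow_add]
        _ = M ^ k := ih
  set X := M ^ k * U ^ (k + 1) with hX
  have hX2 : X = V ^ (k + 1) * M ^ k := by
    calc X = V ^ (k + 1) * M ^ (k + (k + 1)) * U ^ (k + 1) := by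
          rw [hX, ← h2 (k + 1)]
      _ = V ^ (k + 1) * (M ^ (k + (k + 1)) * U ^ (k + 1)) := by rw [mul_assoc]
      _ = V ^ (k + 1) * M ^ k := by rw [h1]
  have hMX : M * X = M ^ k * U ^ k := by
    calc M * X = M ^ (k + 1) * U * U ^ k := by
          rw [hX, pow_succ' U k, pow_succ' M k]
          simp only [mul_assoc]
      _ = M ^ k * U ^ k := by rw [← hU]
  have hXM : X * M = V ^ k * M ^ k := by
    calc X * M = V ^ k * (V * M ^ (k + 1)) := by
          rw [hX2, pow_succ V k, pow_succ M k]
          simp only [mul_assoc]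
      _ = V ^ k * M ^ k := by rw [← hV]
  have hcomm' : M ^ k * U ^ k = V ^ k * M ^ k := by
    conv_lhs => rw [← h2 k]
    rw [mul_assoc, h1]
  have hc1 : M * X = X * M := by rw [hMX, hXM, hcomm']
  refine ⟨X, hc1, ?_, ⟨k, ?_⟩⟩
  · calc X * M * X = X * (M * X) := by rw [mul_assoc]
      _ = V ^ (k + 1) * M ^ k * (M ^ k * U ^ k) := by rw [hMX, hX2]
      _ = V ^ (k + 1) * (M ^ (k + k) * U ^ k) := by
          rw [pow_add M k k]
          simp only [mul_assoc]
      _ = V ^ (k + 1) * M ^ k := by rw [h1]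
      _ = X := hX2.symm
  · calc M ^ (k + 1) * X
        = M ^ (k + (k + 1)) * U ^ (k + 1) := by
          rw [hX, show k + (k + 1) = (k + 1) + k by omega, pow_add M (k + 1) k]
          simp only [mul_assoc]
      _ = M ^ k := h1 (k + 1)

lemma drazin_exists (M : Matrix n n ℂ) :
    ∃ X : Matrix n n ℂ,
      M * X = X * M ∧ X * M * X = X ∧ ∃ j : ℕ, M ^ (j + 1) * X = M ^ j := by
  obtain ⟨k, hk⟩ := exists_rank_stab M
  have hrange : LinearMap.range (M ^ (k + 1)).mulVecLin
      = LinearMap.range (M ^ k).mulVecLin := by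
    refine Submodule.eq_of_le_of_finrank_le (range_pow_le M k (k + 1) (Nat.le_succ k)) ?_
    exact le_of_eq hk
  obtain ⟨U, hU⟩ := exists_factor (A := M ^ (k + 1)) (B := M ^ k) (le_of_eq hrange.symm)
  have hkT : ((Mᵀ) ^ k).rank = ((Mᵀ) ^ (k + 1)).rank := by
    rw [← Matrix.transpose_pow, ← Matrix.transpose_pow,
      Matrix.rank_transpose, Matrix.rank_transpose]
    exact hk
  have hrangeT : LinearMap.range ((Mᵀ) ^ (k + 1)).mulVecLin
      = LinearMap.range ((Mᵀ) ^ k).mulVecLin := by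
    refine Submodule.eq_of_le_of_finrank_le (range_pow_le (Mᵀ) k (k + 1) (Nat.le_succ k)) ?_
    exact le_of_eq hkT
  obtain ⟨W, hW⟩ := exists_factor (A := (Mᵀ) ^ (k + 1)) (B := (Mᵀ) ^ k)
    (le_of_eq hrangeT.symm)
  have hV : M ^ k = Wᵀ * M ^ (k + 1) := by
    have := congrArg Matrix.transpose hW
    rwa [Matrix.transpose_pow, Matrix.transpose_mul, Matrix.transpose_pow,
      Matrix.transpose_transpose] at this
  exact drazin_of M k U Wᵀ hU hV

lemma drazin_spec (M : Matrix n n ℂ) :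
    M * drazin M = drazin M * M ∧ drazin M * M * drazin M = drazin M ∧
      ∃ j : ℕ, M ^ (j + 1) * drazin M = M ^ j := by
  have h := drazin_exists M
  rw [drazin, dif_pos h]
  exact h.choose_spec

lemma pow_drazin_ge (M : Matrix n n ℂ) {k : ℕ}
    (hk : M ^ (k + 1) * drazin M = M ^ k) :
    ∀ j, k ≤ j → M ^ (j + 1) * drazin M = M ^ j := by
  intro j hj
  obtain ⟨t, rfl⟩ := Nat.exists_eq_add_of_le hj
  clear hj
  induction t with
  | zero => simpa using hk
  | succ t ih =>
    have e1 : M ^ (k + (t + 1) + 1) = M * M ^ (k + t + 1) := by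
      rw [show k + (t + 1) + 1 = (k + t + 1) + 1 by omega, pow_succ']
    have e2 : M ^ (k + (t + 1)) = M * M ^ (k + t) := by
      rw [show k + (t + 1) = (k + t) + 1 by omega, pow_succ']
    rw [e1, mul_assoc, ih, e2]

/-- drazin of a nilpotent matrix is 0. -/
lemma drazin_nilpotent_eq_zero {M : Matrix n n ℂ} (h : IsNilpotent M) :
    drazin M = 0 := by
  obtain ⟨c, hc⟩ := h
  have hex : ∃ X : Matrix n n ℂ,
      M * X = X * M ∧ X * M * X = X ∧ ∃ j : ℕ, M ^ (j + 1) * X = M ^ j :=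
    ⟨0, by simp, by simp, ⟨c, by simp [hc]⟩⟩
  rw [drazin, dif_pos hex]
  set X := hex.choose with hXdef
  obtain ⟨hc1, hc2, _⟩ := hex.choose_spec
  have hc2' : X * (M * X) = X := by rw [← mul_assoc]; exact hc2
  have hXg : ∀ j : ℕ, X = X * (M * X) ^ j := by
    intro j
    induction j with
    | zero => simp
    | succ j ih =>
      calc X = X * (M * X) ^ j := ih
        _ = X * (M * X) * (M * X) ^ j := by rw [hc2']
        _ = X * (M * X) ^ (j + 1) := by rw [mul_assoc, ← pow_succ']
  have hcomm : Commute M X := hc1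
  have := hXg c
  rwa [hcomm.mul_pow, hc, zero_mul, mul_zero] at this

end DrazinAux

open DrazinAux

theorem stmt19 {n m : ℕ} (A : Matrix (Fin n) (Fin n) ℂ) (D : Matrix (Fin m) (Fin m) ℂ)
    (C : Matrix (Fin n) (Fin m) ℂ) (B : Matrix (Fin m) (Fin n) ℂ)
    (S : Matrix (Fin n) (Fin n) ℂ) (hS : S = A - C * drazin D * B)
    (h : spi A * (C * drazin D * B) = 0) :
    IsNilpotent (S * spi A) ∧ ind A ≤ ind (S * spi A) ∧
      ind (S * spi A) ≤ ind A + 1 ∧ drazin (S * spi A) = 0 := by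
  obtain ⟨c1, c2, k0, c3⟩ := drazin_spec A
  set dA := drazin A with hdA
  set π := spi A with hπ
  have hπdef : π = 1 - A * dA := by rw [hπ, hdA]; rfl
  set N := S * π with hN
  -- basic commutation facts
  have commA : A * π = π * A := by
    have hh : A * (A * dA) = A * dA * A := by
      conv_lhs => rw [c1, ← mul_assoc]
    rw [hπdef, mul_sub, sub_mul, mul_one, one_mul, hh]
  have he : A * dA * (A * dA) = A * dA := by
    calc A * dA * (A * dA) = A * (dA * A * dA) := by simp only [mul_assoc]
      _ = A * dA := by rw [c2]
  have idem : π * π = π := by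
    rw [hπdef, sub_mul, one_mul, mul_sub, mul_one, he]
    abel
  have hπS : π * S = π * A := by
    rw [hS, mul_sub, h, sub_zero]
  have base : π * N = A * π := by
    rw [hN, ← mul_assoc, hπS, ← commA, mul_assoc, idem]
  have piN : ∀ j : ℕ, π * N ^ j = A ^ j * π := by
    intro j
    induction j with
    | zero => simp
    | succ j ih =>
      rw [pow_succ', ← mul_assoc, base, mul_assoc, ih, ← mul_assoc, ← pow_succ']
  have Npow : ∀ j : ℕ, N ^ (j + 1) = S * (A ^ j * π) := by
    intro j
    conv_lhs => rw [pow_succ']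
    nth_rewrite 1 [hN]
    rw [mul_assoc, piN]
  -- key lemmas about π and ranks
  have key2 : ∀ b : ℕ, A ^ b * π = 0 → (A ^ b).rank = (A ^ (b + 1)).rank := by
    intro b hb
    rw [hπdef, mul_sub, mul_one, ← mul_assoc, ← pow_succ] at hb
    have heq : A ^ b = A ^ (b + 1) * dA := sub_eq_zero.mp hb
    apply le_antisymm
    · have hle : LinearMap.range (A ^ b).mulVecLin
          ≤ LinearMap.range (A ^ (b + 1)).mulVecLin := by
        rw [heq]; exact range_mul_le _ _
      exact Submodule.finrank_mono hle
    · exact rank_pow_antitone A (Nat.le_succ b)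
  have key1 : ∀ a : ℕ, (A ^ a).rank = (A ^ (a + 1)).rank → A ^ a * π = 0 := by
    intro a ha
    set M := max a k0 with hMdef
    have haT : ((Aᵀ) ^ a).rank = ((Aᵀ) ^ (a + 1)).rank := by
      rw [← Matrix.transpose_pow, ← Matrix.transpose_pow,
        Matrix.rank_transpose, Matrix.rank_transpose]
      exact ha
    have hstab := range_stab (Aᵀ) a haT M (le_max_left _ _)
    obtain ⟨Y, hY⟩ := exists_factor (A := (Aᵀ) ^ M) (B := (Aᵀ) ^ a) (le_of_eq hstab.symm)
    have hZ : A ^ a = Yᵀ * A ^ M := by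
      have := congrArg Matrix.transpose hY
      rwa [Matrix.transpose_pow, Matrix.transpose_mul, Matrix.transpose_pow,
        Matrix.transpose_transpose] at this
    have hMd : A ^ (M + 1) * dA = A ^ M := pow_drazin_ge A c3 M (le_max_right _ _)
    have hMkill : A ^ M * π = 0 := by
      rw [hπdef, mul_sub, mul_one, ← mul_assoc, ← pow_succ, hMd, sub_self]
    rw [hZ, mul_assoc, hMkill, mul_zero]
  -- the sets defining ind are nonempty
  have hsetA : {k : ℕ | (A ^ k).rank = (A ^ (k + 1)).rank}.Nonempty := exists_rank_stab A
  have hsetN : {k : ℕ | (N ^ k).rank = (N ^ (k + 1)).rank}.Nonempty := exists_rank_stab N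
  set a := ind A with hinda
  have ha : (A ^ a).rank = (A ^ (a + 1)).rank := Nat.sInf_mem hsetA
  have hAaπ : A ^ a * π = 0 := key1 a ha
  have hNa : N ^ (a + 1) = 0 := by rw [Npow, hAaπ, mul_zero]
  have nilp : IsNilpotent N := ⟨a + 1, hNa⟩
  refine ⟨nilp, ?_, ?_, drazin_nilpotent_eq_zero nilp⟩
  · -- ind A ≤ ind N
    set b := ind N with hindb
    have hb : (N ^ b).rank = (N ^ (b + 1)).rank := Nat.sInf_mem hsetN
    have hNb : N ^ b = 0 := by
      have hstab := range_stab N b hb (max b (a + 1)) (le_max_left _ _)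
      have hNj : N ^ (max b (a + 1)) = 0 := by
        obtain ⟨t, ht⟩ := Nat.exists_eq_add_of_le (le_max_right b (a + 1))
        rw [ht, pow_add, hNa, zero_mul]
      have hr0 : (N ^ b).rank = 0 := by
        have : (N ^ b).rank = (N ^ (max b (a + 1))).rank := by
          unfold Matrix.rank
          rw [hstab]
        rw [this, hNj, Matrix.rank_zero]
      exact rank_eq_zero' hr0
    have hAbπ : A ^ b * π = 0 := by
      rw [← piN, hNb, mul_zero]
    exact Nat.sInf_le (key2 b hAbπ)
  · -- ind N ≤ ind A + 1
    apply Nat.sInf_le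
    have hNa2 : N ^ (a + 1 + 1) = 0 := by rw [pow_succ, hNa, zero_mul]
    show (N ^ (a + 1)).rank = (N ^ (a + 1 + 1)).rank
    rw [hNa, hNa2]
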